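/- Let N, T be positive naturals with T < N, d = gcd(N,T), n = N/d, t = T/d, and M ≥ 2. If L and D are positive naturals with L·(n^M − t^M) = D·n^{M-1}·(n − t), N | L, and T | (D − L) (with D ≥ L), then L ≥ d·n^{M-1}. -/

import Mathlib

open Finset

lemma copr_aux (n t : ℕ) (h : Nat.Coprime n t) (k m : ℕ) :
    Nat.Coprime n (∑ i ∈ range (k+1), n ^ i * t ^ (m - i)) := by
  rw [Finset.sum_range_succ']
  simp only [pow_zero, Nat.sub_zero, one_mul]
  have e : ∑ i ∈ range k, n ^ (i+1) * t ^ (m - (i+1))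
      = n * ∑ i ∈ range k, n ^ i * t ^ (m - (i+1)) := by
    rw [Finset.mul_sum]
    refine Finset.sum_congr rfl fun i _ => by ring
  rw [e, Nat.coprime_mul_left_add_right]
  exact h.pow_right m

theorem subpacketization_lower_bound (N T M : ℕ) (hT : 0 < T) (hTN : T < N) (hM : 2 ≤ M)
    (d n t : ℕ) (hd : d = Nat.gcd N T) (hn : n = N / d) (ht : t = T / d)
    (L D : ℕ) (hL : 0 < L) (hD : 0 < D) (hDL : L ≤ D)
    (hcap : L * (n ^ M - t ^ M) = D * n ^ (M - 1) * (n - t))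
    (hNL : N ∣ L) (hTDL : T ∣ (D - L)) :
    d * n ^ (M - 1) ≤ L := by
  have hd0 : 0 < d := by
    rw [hd]; exact Nat.gcd_pos_of_pos_left T (lt_trans hT hTN)
  have hdN : d ∣ N := hd ▸ Nat.gcd_dvd_left N T
  have hdT : d ∣ T := hd ▸ Nat.gcd_dvd_right N T
  have hN : N = d * n := by rw [hn, Nat.mul_div_cancel' hdN]
  have hT' : T = d * t := by rw [ht, Nat.mul_div_cancel' hdT]
  have ht0 : 0 < t := by
    rcases Nat.eq_zero_or_pos t with h | h
    · rw [hT', h, mul_zero] at hT; omega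
    · exact h
  have htn : t < n := by
    rw [hN, hT'] at hTN; exact lt_of_mul_lt_mul_left hTN (le_of_lt hd0)
  have hn0 : 0 < n := lt_trans ht0 htn
  have hcop : Nat.Coprime n t := by
    rw [hn, ht, hd]
    exact Nat.coprime_div_gcd_div_gcd (hd ▸ hd0)
  -- set up S and S'
  set S : ℕ := ∑ i ∈ range M, n ^ i * t ^ (M - 1 - i) with hS
  set S' : ℕ := ∑ i ∈ range (M - 1), n ^ i * t ^ (M - 2 - i) with hS'
  obtain ⟨M', hM'⟩ : ∃ M', M = M' + 2 := ⟨M - 2, by omega⟩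
  -- key equation L * S = D * n^(M-1)
  have hkey : L * S = D * n ^ (M - 1) := by
    have hcast : (L : ℤ) * ((n:ℤ) ^ M - (t:ℤ) ^ M)
        = (D:ℤ) * (n:ℤ) ^ (M - 1) * ((n:ℤ) - (t:ℤ)) := by
      have h1 : t ^ M ≤ n ^ M := Nat.pow_le_pow_left (le_of_lt htn) M
      have := congrArg (Nat.cast (R := ℤ)) hcap
      push_cast [Nat.cast_sub h1, Nat.cast_sub (le_of_lt htn)] at this
      exact this
    have hgeo : ((n:ℤ) ^ M - (t:ℤ) ^ M)
        = (∑ i ∈ range M, (n:ℤ) ^ i * (t:ℤ) ^ (M - 1 - i)) * ((n:ℤ) - (t:ℤ)) := by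
      rw [geom_sum₂_mul]
    rw [hgeo] at hcast
    have hne : (n:ℤ) - (t:ℤ) ≠ 0 := by
      have : (t:ℤ) < (n:ℤ) := by exact_mod_cast htn
      omega
    have h2 : (L : ℤ) * (∑ i ∈ range M, (n:ℤ) ^ i * (t:ℤ) ^ (M - 1 - i))
        = (D:ℤ) * (n:ℤ) ^ (M - 1) := by
      apply mul_right_cancel₀ hne
      linarith [hcast]
    have h3 : ((L * S : ℕ) : ℤ) = ((D * n ^ (M-1) : ℕ) : ℤ) := by
      push_cast [hS]
      convert h2 using 2
    exact_mod_cast h3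
  -- S coprime to n
  have hSco : Nat.Coprime n S := by
    rw [hS, hM']
    exact copr_aux n t hcop (M' + 1) (M' + 2 - 1)
  have hS'co : Nat.Coprime n S' := by
    rw [hS', hM']
    exact copr_aux n t hcop M' (M' + 2 - 2)
  -- n^(M-1) ∣ L
  have hdvdL : n ^ (M - 1) ∣ L := by
    have : n ^ (M - 1) ∣ L * S := ⟨D, by rw [hkey]; ring⟩
    exact (Nat.Coprime.dvd_of_dvd_mul_right ((hSco.pow_left (M-1))) this)
  obtain ⟨c, hc⟩ := hdvdL
  have hc0 : 0 < c := by
    rcases Nat.eq_zero_or_pos c with h | h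
    · rw [h, mul_zero] at hc; omega
    · exact h
  have hnpow0 : 0 < n ^ (M - 1) := Nat.pow_pos (n := M - 1) hn0
  -- D = c * S
  have hDcS : D = c * S := by
    have : (n ^ (M-1) * c) * S = D * n ^ (M-1) := by rw [← hc]; exact hkey
    have h2 : (c * S) * n ^ (M-1) = D * n ^ (M-1) := by rw [← this]; ring
    exact (Nat.eq_of_mul_eq_mul_right hnpow0 h2).symm
  -- identities S = t*S' + n^(M-1) and relation D - L
  have hAsum : S = t * S' + n ^ (M - 1) := by
    rw [hS, hS', hM']
    simp only [show M' + 2 - 1 = M' + 1 from rfl, show M' + 2 - 2 = M' from rfl]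
    rw [Finset.sum_range_succ, Finset.mul_sum]
    simp only [Nat.sub_self, pow_zero, mul_one]
    congr 1
    refine Finset.sum_congr rfl fun i hi => ?_
    rw [Finset.mem_range] at hi
    rw [show M' + 1 - i = (M' - i) + 1 from by omega]
    ring
  have hDL' : D - L = c * (t * S') := by
    rw [hDcS, hc, hAsum]
    have : c * (t * S' + n ^ (M-1)) = c * (t * S') + n ^ (M-1) * c := by ring
    rw [this]
    omega
  -- T ∣ D - L gives d ∣ c * S'
  have hdcS' : d ∣ c * S' := by
    have h1 : d * t ∣ (c * S') * t := by
      rw [← hT']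
      have : (c * S') * t = D - L := by rw [hDL']; ring
      rw [this]; exact hTDL
    exact (Nat.mul_dvd_mul_iff_right ht0).mp h1
  -- N ∣ L gives d ∣ c * n^(M-2)
  have hdcn : d ∣ c * n ^ (M - 2) := by
    have hpow : n ^ (M - 1) = n ^ (M - 2) * n := by
      rw [← pow_succ]
      congr 1
      omega
    have h1 : d * n ∣ (c * n ^ (M-2)) * n := by
      rw [← hN]
      have : (c * n ^ (M-2)) * n = L := by rw [hc, hpow]; ring
      rw [this]; exact hNL
    exact (Nat.mul_dvd_mul_iff_right hn0).mp h1
  -- conclude d ∣ c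
  have hdc : d ∣ c := by
    have hg : Nat.gcd (c * n ^ (M-2)) (c * S') = c := by
      rw [Nat.gcd_mul_left]
      have : Nat.Coprime (n ^ (M-2)) S' := hS'co.pow_left (M-2)
      rw [this, mul_one]
    have := Nat.dvd_gcd hdcn hdcS'
    rwa [hg] at this
  calc d * n ^ (M-1) ≤ c * n ^ (M-1) :=
        Nat.mul_le_mul_right _ (Nat.le_of_dvd hc0 hdc)
    _ = L := by rw [hc]; ring
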